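/- Let H be a histogram (a vector in R^g with nonnegative coordinates summing to 1) and define its support spt(H) = {j : H(j) > 0} and essential minimum b(H) = min over j ∈ spt(H) of H(j). Let B_N(H) be the set of N-rational histograms H' (i.e., N·H' has integer coordinates) with max_j |H'(j) − H(j)| ≤ 2/(3N). Then card(B_N(H)) ≤ 2^g, and if N > 2/b(H), every H' ∈ B_N(H) satisfies spt(H') = spt(H) and b(H') > b(H)/2. -/

import Mathlib

open Real Finset

/-- `H` is a genetic histogram: nonnegative coordinates summing to 1. -/
def IsHistogram {g : ℕ} (H : Fin g → ℝ) : Prop :=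
  (∀ j, 0 ≤ H j) ∧ ∑ j, H j = 1

/-- Support of a histogram. -/
noncomputable def spt {g : ℕ} (H : Fin g → ℝ) : Finset (Fin g) :=
  Finset.univ.filter (fun j => 0 < H j)

/-- `H'` is `N`-rational: all coordinates of `N·H'` are (nonnegative) integers. -/
def NRational {g : ℕ} (N : ℕ) (H' : Fin g → ℝ) : Prop :=
  ∀ j, ∃ k : ℕ, H' j = (k : ℝ) / N

/-- The `N`-rational ball `B_N(H)` of radius `2/(3N)` around `H` (in sup distance). -/
def ratBall {g : ℕ} (N : ℕ) (H : Fin g → ℝ) : Set (Fin g → ℝ) :=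
  {H' | IsHistogram H' ∧ NRational N H' ∧ (∀ j, |H' j - H j| ≤ 2 / (3 * N))}

/-- `B_N(H)` has at most `2^g` elements, and for `N > 2/b(H)` every `H' ∈ B_N(H)`
has the same support as `H` and essential minimum `b(H') > b(H)/2`. -/
theorem ratBall_card_and_support {g N : ℕ} (hN : 0 < N)
    (H : Fin g → ℝ) (hH : IsHistogram H) (hne : (spt H).Nonempty) :
    (ratBall N H).Finite ∧ (ratBall N H).ncard ≤ 2 ^ g ∧
    ((2 / (spt H).inf' hne H < (N : ℝ)) →
      ∀ H' ∈ ratBall N H, ∃ hne' : (spt H').Nonempty,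
        spt H' = spt H ∧ (spt H).inf' hne H / 2 < (spt H').inf' hne' H') := by
  have hNR : (0:ℝ) < (N:ℝ) := by exact_mod_cast hN
  set F : (Fin g → Bool) → (Fin g → ℝ) :=
    fun b j => ((⌈(N:ℝ) * H j - 2/3⌉ : ℤ) + (if b j then 1 else 0) : ℝ) / N with hF
  have hsub : ratBall N H ⊆ F '' Set.univ := by
    rintro H' ⟨hhist, hrat, hclose⟩
    refine ⟨fun j => decide (H' j ≠ ((⌈(N:ℝ) * H j - 2/3⌉ : ℤ) : ℝ) / N), trivial, ?_⟩
    funext j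
    obtain ⟨k, hk⟩ := hrat j
    set m : ℤ := ⌈(N:ℝ) * H j - 2/3⌉ with hm
    have habs := abs_le.mp (hclose j)
    rw [hk] at habs
    have e1 : ((k:ℝ)/N - H j) * N = (k:ℝ) - N * H j := by field_simp
    have e2 : (2/(3*(N:ℝ))) * N = 2/3 := by field_simp
    have m1 := mul_le_mul_of_nonneg_right habs.1 hNR.le
    have m2 := mul_le_mul_of_nonneg_right habs.2 hNR.le
    rw [e1] at m2
    rw [e1, neg_mul, e2] at m1
    rw [e2] at m2
    have hb1 : (N:ℝ) * H j - 2/3 ≤ (k:ℝ) := by linarith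
    have hb2 : (k:ℝ) ≤ (N:ℝ) * H j + 2/3 := by linarith
    have hml : m ≤ (k:ℤ) := by
      rw [hm]; exact Int.ceil_le.mpr (by exact_mod_cast hb1)
    have hmu : (k:ℤ) ≤ m + 1 := by
      have hxm : (N:ℝ) * H j - 2/3 ≤ (m:ℝ) := Int.le_ceil _
      have h2 : ((k:ℤ):ℝ) < ((m + 2 : ℤ):ℝ) := by push_cast; linarith
      have : (k:ℤ) < m + 2 := by exact_mod_cast h2
      omega
    by_cases hcase : H' j = ((m:ℤ) : ℝ) / N
    · simp [hF, hcase, hm]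
    · have hkm : (k:ℤ) = m + 1 := by
        rcases eq_or_lt_of_le hml with h | h
        · exfalso
          apply hcase
          have hc : ((k:ℕ):ℝ) = (m:ℝ) := by exact_mod_cast h.symm
          rw [hk, hc]
        · omega
      have hcr : ((k:ℕ):ℝ) = (m:ℝ) + 1 := by exact_mod_cast hkm
      simp only [hF, hcase, decide_not]
      have hcase' : ¬ H' j = ((⌈(N:ℝ) * H j - 2/3⌉ : ℤ):ℝ)/N := hcase
      rw [if_pos (by simpa using hcase')]
      rw [hk, hcr]
  have hfin : (ratBall N H).Finite := (Set.finite_univ.image F).subset hsub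
  refine ⟨hfin, ?_, ?_⟩
  · calc (ratBall N H).ncard ≤ (F '' Set.univ).ncard :=
          Set.ncard_le_ncard hsub (Set.finite_univ.image F)
      _ ≤ (Set.univ : Set (Fin g → Bool)).ncard := Set.ncard_image_le Set.finite_univ
      _ = 2 ^ g := by rw [Set.ncard_univ]; simp [Nat.card_eq_fintype_card]
  · intro hNb H' hH'
    obtain ⟨hhist, hrat, hclose⟩ := hH'
    set b := (spt H).inf' hne H with hbdef
    have hbpos : 0 < b := by
      rw [hbdef]
      apply (Finset.lt_inf'_iff _).mpr
      intro i hi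
      exact (Finset.mem_filter.mp hi).2
    have hNb' : 2 / (N:ℝ) < b := by
      rw [div_lt_iff₀ hbpos] at hNb
      rw [div_lt_iff₀ hNR]
      nlinarith
    have h23 : 2/(3*(N:ℝ)) < b/2 := by
      rw [div_lt_iff₀ hNR] at hNb'
      rw [div_lt_div_iff₀ (by positivity) (by norm_num : (0:ℝ) < 2)]
      nlinarith
    have hspt : spt H' = spt H := by
      ext j
      simp only [spt, Finset.mem_filter, Finset.mem_univ, true_and]
      constructor
      · intro hj
        by_contra hj'
        have hHj : H j = 0 := le_antisymm (not_lt.mp hj') (hH.1 j)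
        obtain ⟨k, hk⟩ := hrat j
        have h1 : H' j ≤ 2/(3*N) := by
          have := abs_le.mp (hclose j); linarith [this.2]
        rw [hk] at h1 hj
        have hkpos : 0 < k := by
          by_contra h
          have : k = 0 := by omega
          subst this
          simp at hj
        have hk1 : (1:ℝ) ≤ (k:ℝ) := by exact_mod_cast hkpos
        have : (1:ℝ)/N ≤ (k:ℝ)/N := by gcongr
        have hlt : 2/(3*(N:ℝ)) < 1/N := by
          rw [div_lt_div_iff₀ (by positivity) hNR]
          nlinarith
        linarith
      · intro hj
        have hHj : b ≤ H j := Finset.inf'_le _ (by simp [spt, hj])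
        have := abs_le.mp (hclose j)
        have : H j - 2/(3*N) ≤ H' j := by linarith [this.1]
        linarith
    have hne' : (spt H').Nonempty := hspt ▸ hne
    refine ⟨hne', hspt, ?_⟩
    apply (Finset.lt_inf'_iff _).mpr
    intro j hj
    rw [hspt] at hj
    have hHj : b ≤ H j := Finset.inf'_le _ hj
    have := abs_le.mp (hclose j)
    linarith [this.1]
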